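/- Fix real numbers x > 0, ħ > 0 and an integer d, and for q > 0 define {x}_d := (−√(q/ħ))^d · (ħx; q)_d/(qx; q)_d, where (y; q)_d := ∏_{l=0}^{d−1}(1 − q^l y) for d ≥ 0 and (y; q)_d := ∏_{l=1}^{−d}(1 − q^{−l} y)^{−1} for d < 0 (this expression is defined for all q > 0 outside a finite set). Then the limits lim_{q→0⁺} q^{−|d|/2} {x}_d and lim_{q→+∞} q^{|d|/2} {x}_d exist in ℝ. Consequently, for any x_1,…,x_n > 0 and D_1,…,D_n ∈ ℤ, the function q ↦ q^{−(1/2)Σ_{i=1}^n D_i} ∏_{i=1}^n {x_i}_{D_i} has finite limits as q → 0⁺ and as q → +∞. -/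

import Mathlib

open Filter

noncomputable section

/-- the q-Pochhammer symbol `(y; q)_d` for `d ∈ ℤ` (real version). -/
def qPochZR (q y : ℝ) : ℤ → ℝ
  | Int.ofNat d => ∏ l ∈ Finset.range d, (1 - q ^ l * y)
  | Int.negSucc m => (∏ l ∈ Finset.range (m + 1), (1 - q ^ (-(l : ℤ) - 1) * y))⁻¹

/-- `{x}_d := (-√(q/ħ))^d (ħx;q)_d/(qx;q)_d`. -/
def braceR (q hbar x : ℝ) (d : ℤ) : ℝ :=
  (-Real.sqrt (q / hbar)) ^ d * qPochZR q (hbar * x) d / qPochZR q (q * x) d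

namespace Stmt6Aux

lemma rpow_sum' {q : ℝ} (hq : 0 < q) {ι : Type*} (s : Finset ι) (f : ι → ℝ) :
    q ^ (∑ i ∈ s, f i) = ∏ i ∈ s, q ^ f i := by
  classical
  induction s using Finset.cons_induction with
  | empty => simp
  | cons a s ha ih => rw [Finset.sum_cons, Finset.prod_cons, Real.rpow_add hq, ih]

lemma neg_sqrt_pow {q h : ℝ} (hq : 0 < q) (hh : 0 < h) (n : ℕ) :
    (-Real.sqrt (q / h)) ^ n = (-1) ^ n * (q / h) ^ ((n : ℝ) / 2) := by
  have h0 : (0:ℝ) ≤ q / h := by positivity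
  rw [neg_pow, Real.sqrt_eq_rpow, ← Real.rpow_natCast ((q / h) ^ ((1:ℝ) / 2)) n,
    ← Real.rpow_mul h0, show (1:ℝ) / 2 * (n : ℝ) = (n : ℝ) / 2 by ring]

/-- per-factor identity used for `d ≥ 0`, `q → ∞`. -/
lemma factor1 {q : ℝ} (hq : q ≠ 0) (l : ℕ) (a b : ℝ) :
    q * ((1 - q ^ l * a) / (1 - q ^ (l + 1) * b))
      = (q⁻¹ ^ l - a) / (q⁻¹ ^ (l + 1) - b) := by
  have h1 : q⁻¹ ^ l - a = q⁻¹ ^ l * (1 - q ^ l * a) := by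
    rw [mul_sub, mul_one, ← mul_assoc, ← mul_pow, inv_mul_cancel₀ hq, one_pow, one_mul]
  have h2 : q⁻¹ ^ (l + 1) - b = q⁻¹ ^ (l + 1) * (1 - q ^ (l + 1) * b) := by
    rw [mul_sub, mul_one, ← mul_assoc, ← mul_pow, inv_mul_cancel₀ hq, one_pow, one_mul]
  have h3 : q⁻¹ ^ l / q⁻¹ ^ (l + 1) = q := by
    rw [pow_succ, div_mul_cancel_left₀ (pow_ne_zero l (inv_ne_zero hq)), inv_inv]
  rw [h1, h2, mul_div_mul_comm, h3]

/-- per-factor identity used for `d < 0`, `q → 0⁺`. -/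
lemma factor2 {q : ℝ} (hq : q ≠ 0) (l : ℕ) (a b : ℝ) :
    q⁻¹ * ((1 - (q ^ l)⁻¹ * a) / (1 - (q ^ (l + 1))⁻¹ * b))
      = (q ^ l - a) / (q ^ (l + 1) - b) := by
  have hl : (q : ℝ) ^ l ≠ 0 := pow_ne_zero _ hq
  have hl1 : (q : ℝ) ^ (l + 1) ≠ 0 := pow_ne_zero _ hq
  have h1 : q⁻¹ * (1 - (q ^ l)⁻¹ * a) = (q ^ (l + 1))⁻¹ * (q ^ l - a) := by
    field_simp
    ring
  have h2 : 1 - (q ^ (l + 1))⁻¹ * b = (q ^ (l + 1))⁻¹ * (q ^ (l + 1) - b) := by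
    field_simp
  rw [← mul_div_assoc, h1, h2, mul_div_mul_comm, div_self (inv_ne_zero hl1), one_mul]

section cases

variable {q h x : ℝ}

/-- `d = n ≥ 0`, near `0⁺`. -/
lemma eqA0 (hq : 0 < q) (hh : 0 < h) (n : ℕ) :
    q ^ (-(n : ℝ) / 2) * braceR q h x (Int.ofNat n)
      = ((-1) ^ n * h ^ (-(n : ℝ) / 2)) *
        ∏ l ∈ Finset.range n, (1 - q ^ l * (h * x)) / (1 - q ^ (l + 1) * x) := by
  have hP : qPochZR q (h * x) (Int.ofNat n)
      = ∏ l ∈ Finset.range n, (1 - q ^ l * (h * x)) := rfl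
  have hQ : qPochZR q (q * x) (Int.ofNat n)
      = ∏ l ∈ Finset.range n, (1 - q ^ (l + 1) * x) := by
    show (∏ l ∈ Finset.range n, (1 - q ^ l * (q * x))) = _
    exact Finset.prod_congr rfl fun l _ => by ring
  have hz : (-Real.sqrt (q / h)) ^ (Int.ofNat n)
      = (-1) ^ n * (q / h) ^ ((n : ℝ) / 2) := by
    rw [show (Int.ofNat n) = (n : ℤ) from rfl, zpow_natCast, neg_sqrt_pow hq hh]
  have hqe := (Real.rpow_pos_of_pos hq ((n : ℝ) / 2)).ne'
  have hhe := (Real.rpow_pos_of_pos hh ((n : ℝ) / 2)).ne'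
  have key : q ^ (-((n : ℝ) / 2)) * (q / h) ^ ((n : ℝ) / 2) = h ^ (-((n : ℝ) / 2)) := by
    rw [Real.div_rpow hq.le hh.le, Real.rpow_neg hq.le, Real.rpow_neg hh.le]
    field_simp
  rw [neg_div, braceR, hz, hP, hQ, Finset.prod_div_distrib]
  linear_combination ((-1 : ℝ) ^ n *
    ((∏ l ∈ Finset.range n, (1 - q ^ l * (h * x))) /
      ∏ l ∈ Finset.range n, (1 - q ^ (l + 1) * x))) * key

/-- `d = n ≥ 0`, near `∞`. -/
lemma eqAInf (hq : 0 < q) (hh : 0 < h) (n : ℕ) :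
    q ^ ((n : ℝ) / 2) * braceR q h x (Int.ofNat n)
      = ((-1) ^ n * h ^ (-(n : ℝ) / 2)) *
        ∏ l ∈ Finset.range n, (q⁻¹ ^ l - h * x) / (q⁻¹ ^ (l + 1) - x) := by
  have hP : qPochZR q (h * x) (Int.ofNat n)
      = ∏ l ∈ Finset.range n, (1 - q ^ l * (h * x)) := rfl
  have hQ : qPochZR q (q * x) (Int.ofNat n)
      = ∏ l ∈ Finset.range n, (1 - q ^ (l + 1) * x) := by
    show (∏ l ∈ Finset.range n, (1 - q ^ l * (q * x))) = _
    exact Finset.prod_congr rfl fun l _ => by ring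
  have hz : (-Real.sqrt (q / h)) ^ (Int.ofNat n)
      = (-1) ^ n * (q / h) ^ ((n : ℝ) / 2) := by
    rw [show (Int.ofNat n) = (n : ℤ) from rfl, zpow_natCast, neg_sqrt_pow hq hh]
  have key : q ^ ((n : ℝ) / 2) * (q / h) ^ ((n : ℝ) / 2)
      = q ^ n * h ^ (-((n : ℝ) / 2)) := by
    rw [Real.div_rpow hq.le hh.le, Real.rpow_neg hh.le, ← mul_div_assoc,
      ← Real.rpow_add hq, show (n : ℝ) / 2 + (n : ℝ) / 2 = (n : ℝ) by ring,
      Real.rpow_natCast, div_eq_mul_inv]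
  have hR : q ^ n * ((∏ l ∈ Finset.range n, (1 - q ^ l * (h * x))) /
        ∏ l ∈ Finset.range n, (1 - q ^ (l + 1) * x))
      = ∏ l ∈ Finset.range n, (q⁻¹ ^ l - h * x) / (q⁻¹ ^ (l + 1) - x) :=
    calc q ^ n * ((∏ l ∈ Finset.range n, (1 - q ^ l * (h * x))) /
          ∏ l ∈ Finset.range n, (1 - q ^ (l + 1) * x))
        = ∏ l ∈ Finset.range n, q * ((1 - q ^ l * (h * x)) / (1 - q ^ (l + 1) * x)) := by
          rw [Finset.prod_mul_distrib, Finset.prod_const, Finset.card_range,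
            Finset.prod_div_distrib]
      _ = _ := Finset.prod_congr rfl fun l _ => factor1 hq.ne' l (h * x) x
  rw [neg_div, braceR, hz, hP, hQ, ← hR]
  linear_combination ((-1 : ℝ) ^ n *
    ((∏ l ∈ Finset.range n, (1 - q ^ l * (h * x))) /
      ∏ l ∈ Finset.range n, (1 - q ^ (l + 1) * x))) * key

/-- the two `qPochZR` values for `d = -(m+1) < 0`, in inverse-nat-pow form. -/
lemma hAneg (hq : 0 < q) (m : ℕ) (y : ℝ) :
    qPochZR q y (Int.negSucc m)
      = (∏ l ∈ Finset.range (m + 1), (1 - (q ^ (l + 1))⁻¹ * y))⁻¹ := by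
  show (∏ l ∈ Finset.range (m + 1), (1 - q ^ (-(l : ℤ) - 1) * y))⁻¹ = _
  congr 1
  refine Finset.prod_congr rfl fun l _ => ?_
  rw [show -(l : ℤ) - 1 = -((l + 1 : ℕ) : ℤ) by push_cast; ring, zpow_neg, zpow_natCast]

lemma hBneg (hq : 0 < q) (m : ℕ) :
    qPochZR q (q * x) (Int.negSucc m)
      = (∏ l ∈ Finset.range (m + 1), (1 - (q ^ l)⁻¹ * x))⁻¹ := by
  show (∏ l ∈ Finset.range (m + 1), (1 - q ^ (-(l : ℤ) - 1) * (q * x)))⁻¹ = _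
  congr 1
  refine Finset.prod_congr rfl fun l _ => ?_
  congr 1
  have h1 : q ^ (-(l : ℤ) - 1) * (q * x) = q ^ (-(l : ℤ) - 1) * q * x := by ring
  rw [h1, ← zpow_add_one₀ hq.ne', show -(l : ℤ) - 1 + 1 = -(l : ℤ) by ring,
    zpow_neg, zpow_natCast]

lemma hzneg (hq : 0 < q) (hh : 0 < h) (m : ℕ) :
    (-Real.sqrt (q / h)) ^ (Int.negSucc m)
      = (-1) ^ (m + 1) * ((q / h) ^ (((m + 1 : ℕ) : ℝ) / 2))⁻¹ := by
  rw [zpow_negSucc, neg_sqrt_pow hq hh (m + 1), mul_inv]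
  congr 1
  rw [← inv_pow, inv_neg, inv_one]

/-- `d = -(m+1) < 0`, near `0⁺`. -/
lemma eqB0 (hq : 0 < q) (hh : 0 < h) (m : ℕ) :
    q ^ (-((m + 1 : ℕ) : ℝ) / 2) * braceR q h x (Int.negSucc m)
      = ((-1) ^ (m + 1) * h ^ (((m + 1 : ℕ) : ℝ) / 2)) *
        ∏ l ∈ Finset.range (m + 1), (q ^ l - x) / (q ^ (l + 1) - h * x) := by
  have hqe := (Real.rpow_pos_of_pos hq (((m + 1 : ℕ) : ℝ) / 2)).ne'
  have hhe := (Real.rpow_pos_of_pos hh (((m + 1 : ℕ) : ℝ) / 2)).ne'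
  have h2e : q ^ (((m + 1 : ℕ) : ℝ) / 2) * q ^ (((m + 1 : ℕ) : ℝ) / 2)
      = q ^ (m + 1 : ℕ) := by
    rw [← Real.rpow_add hq,
      show ((m + 1 : ℕ) : ℝ) / 2 + ((m + 1 : ℕ) : ℝ) / 2 = ((m + 1 : ℕ) : ℝ) by ring,
      Real.rpow_natCast]
  have key : q ^ (-(((m + 1 : ℕ) : ℝ) / 2)) * ((q / h) ^ (((m + 1 : ℕ) : ℝ) / 2))⁻¹
      = (q ^ (m + 1 : ℕ))⁻¹ * h ^ (((m + 1 : ℕ) : ℝ) / 2) := by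
    rw [Real.div_rpow hq.le hh.le, Real.rpow_neg hq.le, ← h2e]
    field_simp
  have hprod : (q ^ (m + 1 : ℕ))⁻¹ *
        ((∏ l ∈ Finset.range (m + 1), (1 - (q ^ l)⁻¹ * x)) /
          ∏ l ∈ Finset.range (m + 1), (1 - (q ^ (l + 1))⁻¹ * (h * x)))
      = ∏ l ∈ Finset.range (m + 1), (q ^ l - x) / (q ^ (l + 1) - h * x) :=
    calc (q ^ (m + 1 : ℕ))⁻¹ *
          ((∏ l ∈ Finset.range (m + 1), (1 - (q ^ l)⁻¹ * x)) /
            ∏ l ∈ Finset.range (m + 1), (1 - (q ^ (l + 1))⁻¹ * (h * x)))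
        = ∏ l ∈ Finset.range (m + 1),
            q⁻¹ * ((1 - (q ^ l)⁻¹ * x) / (1 - (q ^ (l + 1))⁻¹ * (h * x))) := by
          rw [Finset.prod_mul_distrib, Finset.prod_const, Finset.card_range,
            Finset.prod_div_distrib, inv_pow]
      _ = _ := Finset.prod_congr rfl fun l _ => factor2 hq.ne' l x (h * x)
  rw [neg_div, braceR, hzneg hq hh m, hAneg hq m (h * x), hBneg hq m, ← hprod, div_inv_eq_mul]
  linear_combination ((-1 : ℝ) ^ (m + 1) *
    ((∏ l ∈ Finset.range (m + 1), (1 - (q ^ l)⁻¹ * x)) /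
      ∏ l ∈ Finset.range (m + 1), (1 - (q ^ (l + 1))⁻¹ * (h * x)))) * key

/-- `d = -(m+1) < 0`, near `∞`. -/
lemma eqBInf (hq : 0 < q) (hh : 0 < h) (m : ℕ) :
    q ^ (((m + 1 : ℕ) : ℝ) / 2) * braceR q h x (Int.negSucc m)
      = ((-1) ^ (m + 1) * h ^ (((m + 1 : ℕ) : ℝ) / 2)) *
        ∏ l ∈ Finset.range (m + 1),
          (1 - q⁻¹ ^ l * x) / (1 - q⁻¹ ^ (l + 1) * (h * x)) := by
  have hqe := (Real.rpow_pos_of_pos hq (((m + 1 : ℕ) : ℝ) / 2)).ne'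
  have hhe := (Real.rpow_pos_of_pos hh (((m + 1 : ℕ) : ℝ) / 2)).ne'
  have key : q ^ (((m + 1 : ℕ) : ℝ) / 2) * ((q / h) ^ (((m + 1 : ℕ) : ℝ) / 2))⁻¹
      = h ^ (((m + 1 : ℕ) : ℝ) / 2) := by
    rw [Real.div_rpow hq.le hh.le]
    field_simp
  have hprod : (∏ l ∈ Finset.range (m + 1), (1 - (q ^ l)⁻¹ * x)) /
        (∏ l ∈ Finset.range (m + 1), (1 - (q ^ (l + 1))⁻¹ * (h * x)))
      = ∏ l ∈ Finset.range (m + 1),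
          (1 - q⁻¹ ^ l * x) / (1 - q⁻¹ ^ (l + 1) * (h * x)) := by
    rw [← Finset.prod_div_distrib]
    exact Finset.prod_congr rfl fun l _ => by rw [inv_pow, inv_pow]
  rw [braceR, hzneg hq hh m, hAneg hq m (h * x), hBneg hq m, ← hprod, div_inv_eq_mul]
  linear_combination ((-1 : ℝ) ^ (m + 1) *
    ((∏ l ∈ Finset.range (m + 1), (1 - (q ^ l)⁻¹ * x)) /
      ∏ l ∈ Finset.range (m + 1), (1 - (q ^ (l + 1))⁻¹ * (h * x)))) * key

end cases

/-- Main lemma, limit at `0⁺`. -/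
lemma main0 (h x : ℝ) (hx : 0 < x) (hh : 0 < h) (d : ℤ) :
    ∃ L : ℝ, Tendsto (fun q : ℝ => q ^ (-(d.natAbs : ℝ) / 2) * braceR q h x d)
      (nhdsWithin 0 (Set.Ioi 0)) (nhds L) := by
  cases d with
  | ofNat n =>
    refine ⟨((-1) ^ n * h ^ (-(n : ℝ) / 2)) *
      ∏ l ∈ Finset.range n, (1 - (0:ℝ) ^ l * (h * x)) / (1 - (0:ℝ) ^ (l + 1) * x), ?_⟩
    have hprod : Tendsto (fun q : ℝ => ∏ l ∈ Finset.range n,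
        (1 - q ^ l * (h * x)) / (1 - q ^ (l + 1) * x)) (nhdsWithin 0 (Set.Ioi 0))
        (nhds (∏ l ∈ Finset.range n,
          (1 - (0:ℝ) ^ l * (h * x)) / (1 - (0:ℝ) ^ (l + 1) * x))) := by
      refine tendsto_finset_prod _ fun l _ => ?_
      have hnum : Tendsto (fun q : ℝ => 1 - q ^ l * (h * x)) (nhdsWithin 0 (Set.Ioi 0))
          (nhds (1 - (0:ℝ) ^ l * (h * x))) :=
        ((continuous_const.sub ((continuous_pow l).mul continuous_const)).tendsto 0).mono_left
          nhdsWithin_le_nhds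
      have hden : Tendsto (fun q : ℝ => 1 - q ^ (l + 1) * x) (nhdsWithin 0 (Set.Ioi 0))
          (nhds (1 - (0:ℝ) ^ (l + 1) * x)) :=
        ((continuous_const.sub ((continuous_pow (l + 1)).mul continuous_const)).tendsto 0).mono_left
          nhdsWithin_le_nhds
      exact hnum.div hden (by norm_num)
    refine (tendsto_const_nhds.mul hprod).congr'
      (Filter.eventuallyEq_of_mem self_mem_nhdsWithin fun q hq => ?_)
    simpa using (eqA0 (Set.mem_Ioi.mp hq) hh n).symm
  | negSucc m =>
    refine ⟨((-1) ^ (m + 1) * h ^ (((m + 1 : ℕ) : ℝ) / 2)) *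
      ∏ l ∈ Finset.range (m + 1), ((0:ℝ) ^ l - x) / ((0:ℝ) ^ (l + 1) - h * x), ?_⟩
    have hprod : Tendsto (fun q : ℝ => ∏ l ∈ Finset.range (m + 1),
        (q ^ l - x) / (q ^ (l + 1) - h * x)) (nhdsWithin 0 (Set.Ioi 0))
        (nhds (∏ l ∈ Finset.range (m + 1),
          ((0:ℝ) ^ l - x) / ((0:ℝ) ^ (l + 1) - h * x))) := by
      refine tendsto_finset_prod _ fun l _ => ?_
      have hnum : Tendsto (fun q : ℝ => q ^ l - x) (nhdsWithin 0 (Set.Ioi 0))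
          (nhds ((0:ℝ) ^ l - x)) :=
        (((continuous_pow l).sub continuous_const).tendsto 0).mono_left nhdsWithin_le_nhds
      have hden : Tendsto (fun q : ℝ => q ^ (l + 1) - h * x) (nhdsWithin 0 (Set.Ioi 0))
          (nhds ((0:ℝ) ^ (l + 1) - h * x)) :=
        (((continuous_pow (l + 1)).sub continuous_const).tendsto 0).mono_left nhdsWithin_le_nhds
      refine hnum.div hden ?_
      have : (0:ℝ) ^ (l + 1) = 0 := zero_pow (Nat.succ_ne_zero l)
      rw [this, zero_sub, neg_ne_zero]
      positivity
    refine (tendsto_const_nhds.mul hprod).congr'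
      (Filter.eventuallyEq_of_mem self_mem_nhdsWithin fun q hq => ?_)
    have := (eqB0 (x := x) (Set.mem_Ioi.mp hq) hh m).symm
    simpa [Int.natAbs_negSucc] using this

/-- Main lemma, limit at `∞`. -/
lemma mainInf (h x : ℝ) (hx : 0 < x) (hh : 0 < h) (d : ℤ) :
    ∃ L : ℝ, Tendsto (fun q : ℝ => q ^ ((d.natAbs : ℝ) / 2) * braceR q h x d)
      atTop (nhds L) := by
  have hinv : Tendsto (fun q : ℝ => q⁻¹) atTop (nhds 0) := tendsto_inv_atTop_zero
  cases d with
  | ofNat n =>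
    refine ⟨((-1) ^ n * h ^ (-(n : ℝ) / 2)) *
      ∏ l ∈ Finset.range n, ((0:ℝ) ^ l - h * x) / ((0:ℝ) ^ (l + 1) - x), ?_⟩
    have hprod : Tendsto (fun q : ℝ => ∏ l ∈ Finset.range n,
        (q⁻¹ ^ l - h * x) / (q⁻¹ ^ (l + 1) - x)) atTop
        (nhds (∏ l ∈ Finset.range n, ((0:ℝ) ^ l - h * x) / ((0:ℝ) ^ (l + 1) - x))) := by
      refine tendsto_finset_prod _ fun l _ => ?_
      refine ((hinv.pow l).sub tendsto_const_nhds).div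
        ((hinv.pow (l + 1)).sub tendsto_const_nhds) ?_
      have : (0:ℝ) ^ (l + 1) = 0 := zero_pow (Nat.succ_ne_zero l)
      rw [this, zero_sub, neg_ne_zero]
      positivity
    refine (tendsto_const_nhds.mul hprod).congr' ?_
    filter_upwards [eventually_gt_atTop (0:ℝ)] with q hq
    simpa using (eqAInf hq hh n).symm
  | negSucc m =>
    refine ⟨((-1) ^ (m + 1) * h ^ (((m + 1 : ℕ) : ℝ) / 2)) *
      ∏ l ∈ Finset.range (m + 1),
        (1 - (0:ℝ) ^ l * x) / (1 - (0:ℝ) ^ (l + 1) * (h * x)), ?_⟩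
    have hprod : Tendsto (fun q : ℝ => ∏ l ∈ Finset.range (m + 1),
        (1 - q⁻¹ ^ l * x) / (1 - q⁻¹ ^ (l + 1) * (h * x))) atTop
        (nhds (∏ l ∈ Finset.range (m + 1),
          (1 - (0:ℝ) ^ l * x) / (1 - (0:ℝ) ^ (l + 1) * (h * x)))) := by
      refine tendsto_finset_prod _ fun l _ => ?_
      refine (tendsto_const_nhds.sub ((hinv.pow l).mul tendsto_const_nhds)).div
        (tendsto_const_nhds.sub ((hinv.pow (l + 1)).mul tendsto_const_nhds)) ?_
      norm_num
    refine (tendsto_const_nhds.mul hprod).congr' ?_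
    filter_upwards [eventually_gt_atTop (0:ℝ)] with q hq
    have := (eqBInf (x := x) hq hh m).symm
    simpa [Int.natAbs_negSucc] using this

end Stmt6Aux

open Stmt6Aux in
/-- `q^{-|d|/2}{x}_d` has a limit as `q → 0⁺` and `q^{|d|/2}{x}_d` has a
limit as `q → +∞`; consequently `q^{-(1/2)ΣᵢDᵢ} ∏ᵢ {xᵢ}_{Dᵢ}` has finite limits as
`q → 0⁺` and `q → +∞`. -/
theorem stmt_6 (x hbar : ℝ) (hx : 0 < x) (hh : 0 < hbar) (d : ℤ) :
    (∃ L : ℝ, Tendsto (fun q : ℝ => q ^ (-(d.natAbs : ℝ) / 2) * braceR q hbar x d)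
      (nhdsWithin 0 (Set.Ioi 0)) (nhds L)) ∧
    (∃ L : ℝ, Tendsto (fun q : ℝ => q ^ ((d.natAbs : ℝ) / 2) * braceR q hbar x d)
      atTop (nhds L)) ∧
    (∀ (n : ℕ) (xs : Fin n → ℝ) (D : Fin n → ℤ), (∀ i, 0 < xs i) →
      (∃ L : ℝ, Tendsto
        (fun q : ℝ => q ^ ((-(∑ i, D i : ℤ) : ℝ) / 2) * ∏ i, braceR q hbar (xs i) (D i))
        (nhdsWithin 0 (Set.Ioi 0)) (nhds L)) ∧
      (∃ L : ℝ, Tendsto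
        (fun q : ℝ => q ^ ((-(∑ i, D i : ℤ) : ℝ) / 2) * ∏ i, braceR q hbar (xs i) (D i))
        atTop (nhds L))) := by
  refine ⟨main0 hbar x hx hh d, mainInf hbar x hx hh d, ?_⟩
  intro n xs D hxs
  constructor
  · choose L hL using fun i => main0 hbar (xs i) (hxs i) hh (D i)
    set e : ℝ := ((∑ i, (((D i).natAbs : ℝ))) - ∑ i, ((D i : ℝ))) / 2 with he
    have he0 : 0 ≤ e := by
      have hle : ∀ i ∈ Finset.univ (α := Fin n), ((D i : ℝ)) ≤ (((D i).natAbs : ℝ)) := by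
        intro i _
        rw [Nat.cast_natAbs, Int.cast_abs]
        exact le_abs_self _
      have := Finset.sum_le_sum hle
      rw [he]; linarith
    have h1s : ∑ i, (-(((D i).natAbs : ℝ)) / 2) = -(∑ i, (((D i).natAbs : ℝ))) / 2 := by
      rw [← Finset.sum_div, ← Finset.sum_neg_distrib]
    have hexp : (((-(∑ i, D i : ℤ)) : ℝ)) / 2 = e + ∑ i, (-(((D i).natAbs : ℝ)) / 2) := by
      rw [h1s, he]
      push_cast
      ring
    refine ⟨(0:ℝ) ^ e * ∏ i, L i, ?_⟩
    have h1 : Tendsto (fun q : ℝ => q ^ e) (nhdsWithin 0 (Set.Ioi 0)) (nhds ((0:ℝ) ^ e)) :=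
      (Real.continuousAt_rpow_const 0 e (Or.inr he0)).tendsto.mono_left nhdsWithin_le_nhds
    have h2 : Tendsto (fun q : ℝ =>
        ∏ i, q ^ (-(((D i).natAbs : ℝ)) / 2) * braceR q hbar (xs i) (D i))
        (nhdsWithin 0 (Set.Ioi 0)) (nhds (∏ i, L i)) :=
      tendsto_finset_prod _ fun i _ => hL i
    refine (h1.mul h2).congr' ?_
    filter_upwards [self_mem_nhdsWithin] with q hq
    have hq' : (0:ℝ) < q := hq
    rw [Finset.prod_mul_distrib,
      ← rpow_sum' hq' Finset.univ (fun i => -(((D i).natAbs : ℝ)) / 2),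
      ← mul_assoc, ← Real.rpow_add hq', ← hexp]
  · choose L hL using fun i => mainInf hbar (xs i) (hxs i) hh (D i)
    set e : ℝ := (-(∑ i, ((D i : ℝ))) - ∑ i, (((D i).natAbs : ℝ))) / 2 with he
    have he0 : e ≤ 0 := by
      have hle : ∀ i ∈ Finset.univ (α := Fin n), (-(D i : ℝ)) ≤ (((D i).natAbs : ℝ)) := by
        intro i _
        rw [Nat.cast_natAbs, Int.cast_abs]
        exact neg_le_abs _
      have h2 := Finset.sum_le_sum hle
      rw [Finset.sum_neg_distrib] at h2
      rw [he]
      linarith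
    have h1s : ∑ i, ((((D i).natAbs : ℝ)) / 2) = (∑ i, (((D i).natAbs : ℝ))) / 2 :=
      (Finset.sum_div _ _ _).symm
    have hexp : (((-(∑ i, D i : ℤ)) : ℝ)) / 2 = e + ∑ i, ((((D i).natAbs : ℝ)) / 2) := by
      rw [h1s, he]
      push_cast
      ring
    have hE : ∃ Le : ℝ, Tendsto (fun q : ℝ => q ^ e) atTop (nhds Le) := by
      rcases he0.lt_or_eq with hlt | heq
      · exact ⟨0, by simpa using tendsto_rpow_neg_atTop (by linarith : (0:ℝ) < -e)⟩
      · exact ⟨1, by simp only [heq, Real.rpow_zero]; exact tendsto_const_nhds⟩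
    obtain ⟨Le, hLe⟩ := hE
    refine ⟨Le * ∏ i, L i, ?_⟩
    have h2 : Tendsto (fun q : ℝ =>
        ∏ i, q ^ ((((D i).natAbs : ℝ)) / 2) * braceR q hbar (xs i) (D i))
        atTop (nhds (∏ i, L i)) :=
      tendsto_finset_prod _ fun i _ => hL i
    refine (hLe.mul h2).congr' ?_
    filter_upwards [eventually_gt_atTop (0:ℝ)] with q hq'
    rw [Finset.prod_mul_distrib,
      ← rpow_sum' hq' Finset.univ (fun i => (((D i).natAbs : ℝ)) / 2),
      ← mul_assoc, ← Real.rpow_add hq', ← hexp]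

end
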